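/- arXiv:1601.01639 — 3 statements merged into one kernel-verified Lean document; each statement's English description precedes it below -/
import Mathlib

section
/- If ν₁ and ν₂ are compactly supported exact-dimensional Borel measures on ℝ of dimensions d₁ and d₂ respectively, and d₁ + d₂ < 1, then the convolution ν₁ ∗ ν₂ is singular with respect to Lebesgue measure. -/
open MeasureTheory Metric Filter Set

/-- `μ` is exact-dimensional of dimension `d`: for `μ`-a.e. `x`,
`log μ(B(x,ε)) / log ε → d` as `ε → 0⁺`. -/
def ExactDimensional (μ : Measure ℝ) (d : ℝ) : Prop :=
  ∀ᵐ x ∂μ, Tendsto (fun ε : ℝ => Real.log (μ (ball x ε)).toReal / Real.log ε)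
    (nhdsWithin 0 (Ioi 0)) (nhds d)

/-- The convolution of two measures on `ℝ`, i.e. the pushforward of the product
measure under addition. -/
noncomputable def conv (μ ν : Measure ℝ) : Measure ℝ :=
  Measure.map (fun p : ℝ × ℝ => p.1 + p.2) (μ.prod ν)

/-- Almost every point has positive measure on all balls around it. -/
lemma aux_pos_balls (μ : Measure ℝ) : ∀ᵐ x ∂μ, ∀ r : ℝ, 0 < r → 0 < μ (ball x r) := by
  set U : Set ℝ := ⋃ p : {p : ℚ × ℚ // μ (ball ((p.1 : ℝ)) ((p.2 : ℝ))) = 0},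
      ball (((p : ℚ × ℚ).1 : ℝ)) (((p : ℚ × ℚ).2 : ℝ)) with hU
  have hU0 : μ U = 0 := measure_iUnion_null fun p => p.2
  rw [ae_iff]
  refine measure_mono_null ?_ hU0
  intro x hx
  simp only [mem_setOf_eq, not_forall, Classical.not_imp, not_lt] at hx
  obtain ⟨r, hr, hxr⟩ := hx
  have h0 : μ (ball x r) = 0 := le_antisymm hxr zero_le
  obtain ⟨s, hs0, hsr⟩ := exists_rat_btwn (by linarith : (0:ℝ) < r / 2)
  obtain ⟨q, hq1, hq2⟩ := exists_rat_btwn (show x - (s:ℝ) < x by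
    have : (0:ℝ) < s := hs0
    linarith)
  have hxq : dist x (q:ℝ) < (s:ℝ) := by
    rw [Real.dist_eq, abs_lt]; constructor <;> linarith
  have hball : ball ((q:ℝ)) ((s:ℝ)) ⊆ ball x r := by
    intro y hy
    rw [mem_ball] at hy ⊢
    calc dist y x ≤ dist y (q:ℝ) + dist (q:ℝ) x := dist_triangle _ _ _
      _ < (s:ℝ) + (s:ℝ) := by
          rw [dist_comm (q:ℝ) x]; exact add_lt_add hy hxq
      _ ≤ r := by linarith
  have hq0 : μ (ball ((q:ℝ)) ((s:ℝ))) = 0 :=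
    le_antisymm (h0 ▸ measure_mono hball) zero_le
  exact mem_iUnion.mpr ⟨⟨(q, s), hq0⟩, mem_ball.mpr hxq⟩

lemma aux_ae_fst {ν₁ ν₂ : Measure ℝ} [IsFiniteMeasure ν₂] {P : ℝ → Prop}
    (h : ∀ᵐ x ∂ν₁, P x) : ∀ᵐ p ∂ν₁.prod ν₂, P p.1 := by
  rw [ae_iff] at h ⊢
  obtain ⟨T, hT1, hT2, hT3⟩ := exists_measurable_superset_of_null h
  refine measure_mono_null (fun p hp => ?_) (?_ : (ν₁.prod ν₂) (T ×ˢ univ) = 0)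
  · exact ⟨hT1 hp, mem_univ _⟩
  · rw [Measure.prod_prod, hT3, zero_mul]

lemma aux_ae_snd {ν₁ ν₂ : Measure ℝ} [IsFiniteMeasure ν₁] [IsFiniteMeasure ν₂] {P : ℝ → Prop}
    (h : ∀ᵐ y ∂ν₂, P y) : ∀ᵐ p ∂ν₁.prod ν₂, P p.2 := by
  rw [ae_iff] at h ⊢
  obtain ⟨T, hT1, hT2, hT3⟩ := exists_measurable_superset_of_null h
  refine measure_mono_null (fun p hp => ?_) (?_ : (ν₁.prod ν₂) (univ ×ˢ T) = 0)
  · exact ⟨mem_univ _, hT1 hp⟩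
  · rw [Measure.prod_prod, hT3, mul_zero]

lemma aux_eventually_ge {μ : Measure ℝ} [IsFiniteMeasure μ] {x d : ℝ} (δ : ℝ) (hδ : 0 < δ)
    (hpos : ∀ r : ℝ, 0 < r → 0 < μ (ball x r))
    (ht : Tendsto (fun ε : ℝ => Real.log (μ (ball x ε)).toReal / Real.log ε)
      (nhdsWithin 0 (Ioi 0)) (nhds d)) :
    ∀ᶠ ε in nhdsWithin (0:ℝ) (Ioi 0), ENNReal.ofReal (ε ^ (d + δ)) ≤ μ (ball x ε) := by
  have h1 : ∀ᶠ ε in nhdsWithin (0:ℝ) (Ioi 0),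
      Real.log (μ (ball x ε)).toReal / Real.log ε < d + δ :=
    ht.eventually_lt_const (by linarith)
  have h2 : Ioo (0:ℝ) 1 ∈ nhdsWithin (0:ℝ) (Ioi 0) :=
    Ioo_mem_nhdsGT_of_mem ⟨le_refl 0, one_pos⟩
  filter_upwards [h1, h2] with ε hlt hε
  obtain ⟨hε0, hε1⟩ := hε
  have hm0 : 0 < μ (ball x ε) := hpos ε hε0
  have hmt : 0 < (μ (ball x ε)).toReal := ENNReal.toReal_pos hm0.ne' (measure_ne_top μ _)
  have hlog : Real.log ε < 0 := Real.log_neg hε0 hε1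
  rw [div_lt_iff_of_neg hlog] at hlt
  have hlt' : Real.log ε * (d + δ) < Real.log (μ (ball x ε)).toReal := by linarith [hlt]
  have hkey : ε ^ (d + δ) < (μ (ball x ε)).toReal := by
    rw [Real.rpow_def_of_pos hε0]
    calc Real.exp (Real.log ε * (d + δ))
        < Real.exp (Real.log (μ (ball x ε)).toReal) := Real.exp_lt_exp.mpr hlt'
      _ = (μ (ball x ε)).toReal := Real.exp_log hmt
  calc ENNReal.ofReal (ε ^ (d + δ)) ≤ ENNReal.ofReal (μ (ball x ε)).toReal :=
        ENNReal.ofReal_le_ofReal hkey.le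
    _ = μ (ball x ε) := ENNReal.ofReal_toReal (measure_ne_top μ _)

theorem singular_convolution_of_exactDimensional
    (ν₁ ν₂ : Measure ℝ) [IsFiniteMeasure ν₁] [IsFiniteMeasure ν₂]
    (K₁ K₂ : Set ℝ) (hK₁ : IsCompact K₁) (hK₂ : IsCompact K₂)
    (hs₁ : ν₁ K₁ᶜ = 0) (hs₂ : ν₂ K₂ᶜ = 0)
    (d₁ d₂ : ℝ) (h₁ : ExactDimensional ν₁ d₁) (h₂ : ExactDimensional ν₂ d₂)
    (hd : d₁ + d₂ < 1) :
    Measure.MutuallySingular (conv ν₁ ν₂) volume := by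
  classical
  set μ : Measure ℝ := conv ν₁ ν₂ with hμ
  have hadd : Measurable fun p : ℝ × ℝ => p.1 + p.2 := measurable_fst.add measurable_snd
  haveI : IsFiniteMeasure μ := hμ ▸ Measure.isFiniteMeasure_map (ν₁.prod ν₂) _
  set δ : ℝ := (1 - (d₁ + d₂)) / 8 with hδdef
  have hδ : 0 < δ := by rw [hδdef]; linarith
  set e : ℝ := d₁ + d₂ + 2 * δ with he
  set c : ℝ := (e + 1) / 2 with hc
  have he1 : e < 1 := by rw [he, hδdef]; linarith
  have hec : e < c := by rw [hc]; linarith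
  have hc1 : c < 1 := by rw [hc]; linarith
  -- measurability of z ↦ μ (closedBall z r)
  have hmeasfun : ∀ r : ℝ, Measurable fun z : ℝ => μ (closedBall z r) := by
    intro r
    have hs : MeasurableSet {p : ℝ × ℝ | dist p.2 p.1 ≤ r} :=
      measurableSet_le (measurable_dist.comp (measurable_snd.prodMk measurable_fst))
        measurable_const
    have h := measurable_measure_prodMk_left (ν := μ) hs
    have heq : (fun z : ℝ => μ (closedBall z r))
        = fun z : ℝ => μ (Prod.mk z ⁻¹' {p : ℝ × ℝ | dist p.2 p.1 ≤ r}) := by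
      funext z; congr 1
    rw [heq]; exact h
  set A : Set ℝ := {z : ℝ | ∃ n : ℕ, ∀ q : ℚ, 0 < (q:ℝ) → (q:ℝ) < ((n:ℝ) + 1)⁻¹ →
      ENNReal.ofReal ((q:ℝ) ^ c) ≤ μ (closedBall z (q:ℝ))} with hAdef
  have hA : MeasurableSet A := by
    have h1 : ∀ (n : ℕ) (q : ℚ), MeasurableSet {z : ℝ | 0 < (q:ℝ) → (q:ℝ) < ((n:ℝ) + 1)⁻¹ →
        ENNReal.ofReal ((q:ℝ) ^ c) ≤ μ (closedBall z (q:ℝ))} := by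
      intro n q
      by_cases h : 0 < (q:ℝ) ∧ (q:ℝ) < ((n:ℝ) + 1)⁻¹
      · have heq : {z : ℝ | 0 < (q:ℝ) → (q:ℝ) < ((n:ℝ) + 1)⁻¹ →
            ENNReal.ofReal ((q:ℝ) ^ c) ≤ μ (closedBall z (q:ℝ))}
            = {z : ℝ | ENNReal.ofReal ((q:ℝ) ^ c) ≤ μ (closedBall z (q:ℝ))} := by
          ext z; simp [h.1, h.2]
        rw [heq]
        exact measurableSet_le measurable_const (hmeasfun (q:ℝ))
      · have heq : {z : ℝ | 0 < (q:ℝ) → (q:ℝ) < ((n:ℝ) + 1)⁻¹ →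
            ENNReal.ofReal ((q:ℝ) ^ c) ≤ μ (closedBall z (q:ℝ))} = univ :=
          eq_univ_of_forall fun z hp hq => absurd ⟨hp, hq⟩ h
        rw [heq]; exact MeasurableSet.univ
    have heq : A = ⋃ n : ℕ, ⋂ q : ℚ, {z : ℝ | 0 < (q:ℝ) → (q:ℝ) < ((n:ℝ) + 1)⁻¹ →
        ENNReal.ofReal ((q:ℝ) ^ c) ≤ μ (closedBall z (q:ℝ))} := by
      ext z; simp only [hAdef, mem_setOf_eq, mem_iUnion, mem_iInter]
    rw [heq]
    exact MeasurableSet.iUnion fun n => MeasurableSet.iInter fun q => h1 n q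
  -- μ Aᶜ = 0
  have hμA : μ Aᶜ = 0 := by
    have key : ∀ᵐ p ∂ν₁.prod ν₂, p.1 + p.2 ∈ A := by
      filter_upwards [aux_ae_fst (ν₂ := ν₂) h₁, aux_ae_fst (ν₂ := ν₂) (aux_pos_balls ν₁),
        aux_ae_snd (ν₁ := ν₁) h₂, aux_ae_snd (ν₁ := ν₁) (aux_pos_balls ν₂)] with p ht1 hp1 ht2 hp2
      obtain ⟨x, y⟩ := p
      simp only at ht1 hp1 ht2 hp2
      have e₁ := aux_eventually_ge δ hδ hp1 ht1
      have e₂ := aux_eventually_ge δ hδ hp2 ht2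
      have hhalf : Tendsto (fun ε : ℝ => ε / 2) (nhdsWithin 0 (Ioi 0))
          (nhdsWithin 0 (Ioi 0)) := by
        rw [tendsto_nhdsWithin_iff]
        constructor
        · have : Tendsto (fun ε : ℝ => ε / 2) (nhds 0) (nhds (0 / 2 : ℝ)) :=
            tendsto_id.div_const 2
          simpa using this.mono_left nhdsWithin_le_nhds
        · filter_upwards [self_mem_nhdsWithin] with ε hε
          exact mem_Ioi.mpr (div_pos (mem_Ioi.mp hε) two_pos)
      have e₁' := hhalf.eventually e₁
      have e₂' := hhalf.eventually e₂
      have ecomp : ∀ᶠ ε in nhdsWithin (0:ℝ) (Ioi 0), ε ^ c ≤ (ε / 2) ^ e := by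
        have hev : ∀ᶠ ε in nhdsWithin (0:ℝ) (Ioi 0),
            Real.log ε ≤ (-e * Real.log 2) / (c - e) :=
          Real.tendsto_log_nhdsGT_zero.eventually (eventually_le_atBot _)
        filter_upwards [hev, self_mem_nhdsWithin] with ε hle hε
        have hε0 : 0 < ε := mem_Ioi.mp hε
        have h2 : (0:ℝ) < ε / 2 := by linarith
        rw [Real.rpow_def_of_pos hε0, Real.rpow_def_of_pos h2]
        apply Real.exp_le_exp.mpr
        rw [Real.log_div hε0.ne' two_ne_zero]
        have hce : 0 < c - e := by linarith
        have h3 : (c - e) * Real.log ε ≤ -e * Real.log 2 := by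
          have := mul_le_mul_of_nonneg_left hle hce.le
          rwa [mul_div_cancel₀ _ hce.ne'] at this
        nlinarith [h3]
      have main : ∀ᶠ ε in nhdsWithin (0:ℝ) (Ioi 0),
          ENNReal.ofReal (ε ^ c) ≤ μ (ball (x + y) ε) := by
        filter_upwards [e₁', e₂', ecomp, self_mem_nhdsWithin] with ε h1 h2 h3 hε
        have hε0 : 0 < ε := mem_Ioi.mp hε
        have h2pos : (0:ℝ) < ε / 2 := by linarith
        have hsub : ball x (ε / 2) ×ˢ ball y (ε / 2)
            ⊆ (fun p : ℝ × ℝ => p.1 + p.2) ⁻¹' ball (x + y) ε := by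
          rintro ⟨u, v⟩ ⟨hu, hv⟩
          simp only [mem_preimage, mem_ball] at *
          calc dist (u + v) (x + y) ≤ dist u x + dist v y := dist_add_add_le _ _ _ _
            _ < ε / 2 + ε / 2 := add_lt_add hu hv
            _ = ε := by ring
        calc ENNReal.ofReal (ε ^ c) ≤ ENNReal.ofReal ((ε / 2) ^ e) :=
              ENNReal.ofReal_le_ofReal h3
          _ = ENNReal.ofReal ((ε / 2) ^ (d₁ + δ) * (ε / 2) ^ (d₂ + δ)) := by
              rw [← Real.rpow_add h2pos, show d₁ + δ + (d₂ + δ) = e by rw [he]; ring]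
          _ = ENNReal.ofReal ((ε / 2) ^ (d₁ + δ)) * ENNReal.ofReal ((ε / 2) ^ (d₂ + δ)) :=
              ENNReal.ofReal_mul (Real.rpow_nonneg h2pos.le _)
          _ ≤ ν₁ (ball x (ε / 2)) * ν₂ (ball y (ε / 2)) := mul_le_mul' h1 h2
          _ = (ν₁.prod ν₂) (ball x (ε / 2) ×ˢ ball y (ε / 2)) := (Measure.prod_prod _ _).symm
          _ ≤ (ν₁.prod ν₂) ((fun p : ℝ × ℝ => p.1 + p.2) ⁻¹' ball (x + y) ε) :=
              measure_mono hsub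
          _ = μ (ball (x + y) ε) := by
              rw [show μ = Measure.map (fun p : ℝ × ℝ => p.1 + p.2) (ν₁.prod ν₂) from hμ,
                Measure.map_apply hadd measurableSet_ball]
      obtain ⟨u, hu, hsubI⟩ := mem_nhdsGT_iff_exists_Ioo_subset.mp main
      have hu0 : (0:ℝ) < u := mem_Ioi.mp hu
      obtain ⟨n, hn⟩ := exists_nat_one_div_lt hu0
      refine ⟨n, fun q hq0 hqn => ?_⟩
      have hqu : (q:ℝ) < u := by
        rw [one_div] at hn
        exact lt_trans hqn hn
      have := hsubI ⟨hq0, hqu⟩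
      exact le_trans this (measure_mono ball_subset_closedBall)
    rw [show μ = Measure.map (fun p : ℝ × ℝ => p.1 + p.2) (ν₁.prod ν₂) from hμ,
      Measure.map_apply hadd hA.compl]
    rw [ae_iff] at key
    exact key
  -- volume A = 0
  have hvolA : volume A = 0 := by
    have hnotA : ∀ᵐ z ∂(volume : Measure ℝ), z ∉ A := by
      filter_upwards [Besicovitch.ae_tendsto_rnDeriv μ volume,
        Measure.rnDeriv_lt_top μ volume] with z hz hz'
      intro hzA
      obtain ⟨n, hn⟩ := hzA
      set L := μ.rnDeriv volume z with hL
      have hL1 : L < L + 1 := ENNReal.lt_add_right hz'.ne one_ne_zero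
      have hev : ∀ᶠ r in nhdsWithin (0:ℝ) (Ioi 0),
          μ (closedBall z r) / volume (closedBall z r) < L + 1 :=
        hz.eventually_lt_const hL1
      have hpow : Tendsto (fun r : ℝ => r ^ (c - 1) / 2) (nhdsWithin (0:ℝ) (Ioi 0)) atTop := by
        have hcc : (0:ℝ) < 1 - c := by linarith
        have h1 : Tendsto (fun r : ℝ => (r⁻¹) ^ (1 - c)) (nhdsWithin (0:ℝ) (Ioi 0)) atTop :=
          (tendsto_rpow_atTop hcc).comp tendsto_inv_nhdsGT_zero
        have h2 : Tendsto (fun r : ℝ => r ^ (c - 1)) (nhdsWithin (0:ℝ) (Ioi 0)) atTop := by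
          apply h1.congr'
          filter_upwards [self_mem_nhdsWithin] with r hr
          have hr0 : 0 < r := mem_Ioi.mp hr
          rw [Real.inv_rpow hr0.le, ← Real.rpow_neg hr0.le]
          ring_nf
        exact h2.atTop_div_const two_pos
      have hbig : ∀ᶠ r in nhdsWithin (0:ℝ) (Ioi 0), (L + 1).toReal < r ^ (c - 1) / 2 :=
        hpow.eventually (eventually_gt_atTop _)
      have hsmall : ∀ᶠ r in nhdsWithin (0:ℝ) (Ioi 0), r < ((n:ℝ) + 1)⁻¹ :=
        mem_nhdsWithin_of_mem_nhds (Iio_mem_nhds (by positivity))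
      obtain ⟨u, hu, hsubI⟩ := mem_nhdsGT_iff_exists_Ioo_subset.mp
        (hev.and (hbig.and hsmall))
      have hu0 : (0:ℝ) < u := mem_Ioi.mp hu
      obtain ⟨q, hq0, hqu⟩ := exists_rat_btwn hu0
      have hq0' : 0 < (q:ℝ) := by exact_mod_cast hq0
      obtain ⟨hev_q, hbig_q, hsmall_q⟩ := hsubI ⟨hq0', hqu⟩
      have hA_q := hn q hq0' hsmall_q
      have hvol : volume (closedBall z (q:ℝ)) = ENNReal.ofReal (2 * (q:ℝ)) :=
        Real.volume_closedBall z (q:ℝ)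
      have hratio : ENNReal.ofReal ((q:ℝ) ^ c / (2 * (q:ℝ)))
          ≤ μ (closedBall z (q:ℝ)) / volume (closedBall z (q:ℝ)) := by
        rw [hvol, ENNReal.ofReal_div_of_pos (by positivity)]
        exact ENNReal.div_le_div hA_q (le_refl _)
      have hLtop : L + 1 ≠ ⊤ := ENNReal.add_ne_top.mpr ⟨hz'.ne, ENNReal.one_ne_top⟩
      have hgt : L + 1 < ENNReal.ofReal ((q:ℝ) ^ c / (2 * (q:ℝ))) := by
        rw [ENNReal.lt_ofReal_iff_toReal_lt hLtop]
        have heq2 : (q:ℝ) ^ c / (2 * (q:ℝ)) = (q:ℝ) ^ (c - 1) / 2 := by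
          rw [Real.rpow_sub hq0', Real.rpow_one]; ring
        rw [heq2]; exact hbig_q
      exact lt_irrefl _ (lt_trans (lt_of_lt_of_le hgt hratio) hev_q)
    have := ae_iff.mp hnotA
    simpa only [not_not, setOf_mem_eq] using this
  exact ⟨Aᶜ, hA.compl, hμA, by rwa [compl_compl]⟩
end

section
/- Let ν₁, ν₂ be finite Borel measures on ℝ and let ν = ν₁ ∗ ν₂ be their convolution. If the product measure ν₁ × ν₂ has lower local dimension at most D at (ν₁ × ν₂)-almost every point, then for ν-almost every x ∈ ℝ, the lower local dimension of ν at x is at most D. -/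
open MeasureTheory Metric Filter Set

/-- The lower local dimension of a measure at a point. -/
noncomputable def lowerLocalDim {X : Type*} [MetricSpace X] [MeasurableSpace X]
    (μ : Measure X) (x : X) : ℝ :=
  liminf (fun ε : ℝ => Real.log (μ (ball x ε)).toReal / Real.log ε)
    (nhdsWithin 0 (Ioi 0))

namespace LLDAux

/-- The quantity whose liminf is the lower local dimension. -/
noncomputable def F {X : Type*} [MetricSpace X] [MeasurableSpace X]
    (μ : Measure X) (x : X) (ε : ℝ) : ℝ :=
  Real.log (μ (ball x ε)).toReal / Real.log ε

lemma lld_eq {X : Type*} [MetricSpace X] [MeasurableSpace X] (μ : Measure X) (x : X) :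
    lowerLocalDim μ x = liminf (F μ x) (nhdsWithin 0 (Ioi 0)) := rfl

lemma lld_eq_sSup {X : Type*} [MetricSpace X] [MeasurableSpace X] (μ : Measure X) (x : X) :
    lowerLocalDim μ x = sSup {a | ∀ᶠ ε in nhdsWithin (0:ℝ) (Ioi 0), a ≤ F μ x ε} := by
  rw [lld_eq]; exact liminf_eq

lemma lsc_ball {X : Type*} [MetricSpace X] [MeasurableSpace X] (μ : Measure X) (r : ℝ) :
    LowerSemicontinuous (fun x => μ (ball x r)) := by
  intro x c hc
  have hU : ball x r = ⋃ n : ℕ, closedBall x (r - 1/(n+1)) := by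
    ext y
    simp only [mem_ball, mem_iUnion, mem_closedBall]
    constructor
    · intro hy
      obtain ⟨n, hn⟩ := exists_nat_one_div_lt (sub_pos.2 hy)
      exact ⟨n, by linarith⟩
    · rintro ⟨n, hn⟩
      have h0 : (0:ℝ) < 1/(n+1) := by positivity
      linarith
  have hdir : Directed (· ⊆ ·) (fun n : ℕ => closedBall x (r - 1/((n:ℝ)+1))) := by
    intro a b
    rcases le_total a b with hab | hab
    · refine ⟨b, closedBall_subset_closedBall (by gcongr <;> exact_mod_cast hab), subset_rfl⟩
    · refine ⟨a, subset_rfl, closedBall_subset_closedBall (by gcongr <;> exact_mod_cast hab)⟩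
  change c < μ (ball x r) at hc
  rw [hU, hdir.measure_iUnion, lt_iSup_iff] at hc
  obtain ⟨n, hn⟩ := hc
  have hpos : (0:ℝ) < 1/(n+1) := by positivity
  filter_upwards [ball_mem_nhds x hpos] with y hy
  refine hn.trans_le (measure_mono fun z hz => ?_)
  rw [mem_closedBall] at hz
  rw [mem_ball] at hy ⊢
  have : dist z y ≤ dist z x + dist x y := dist_triangle _ _ _
  rw [dist_comm y x] at hy
  linarith

lemma measurable_F {X : Type*} [MetricSpace X] [MeasurableSpace X] [OpensMeasurableSpace X]
    (μ : Measure X) (r : ℝ) : Measurable fun x => F μ x r :=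
  (Real.measurable_log.comp (ENNReal.measurable_toReal.comp (lsc_ball μ r).measurable)).div_const _

lemma ae_ball_pos (μ : Measure ℝ) : ∀ᵐ x ∂μ, ∀ δ : ℝ, 0 < δ → 0 < μ (ball x δ) := by
  have hnull : μ (⋃ q : ℚ × ℚ, if μ (ball (q.1:ℝ) (q.2:ℝ)) = 0 then ball (q.1:ℝ) (q.2:ℝ) else ∅)
      = 0 := by
    refine measure_iUnion_null fun q => ?_
    by_cases hq : μ (ball (q.1:ℝ) (q.2:ℝ)) = 0 <;> simp [hq]
  rw [ae_iff]
  refine measure_mono_null ?_ hnull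
  intro x hx
  simp only [mem_setOf_eq, not_forall] at hx
  obtain ⟨δ, hδ, h0⟩ := hx
  have hδ0 : 0 < δ := hδ
  have hnull' : μ (ball x δ) = 0 := by
    simpa using h0
  obtain ⟨q1, hq1a, hq1b⟩ := exists_rat_btwn (show x - δ/4 < x by linarith)
  obtain ⟨q2, hq2a, hq2b⟩ := exists_rat_btwn (show (δ/4:ℝ) < δ/2 by linarith)
  have hxq : |x - (q1:ℝ)| < (q2:ℝ) := by
    rw [abs_lt]; constructor <;> linarith
  have hsub : ball (q1:ℝ) (q2:ℝ) ⊆ ball x δ := by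
    intro z hz
    rw [mem_ball, Real.dist_eq] at hz ⊢
    have h1 : |z - x| ≤ |z - (q1:ℝ)| + |(q1:ℝ) - x| := by
      calc |z - x| = |(z - (q1:ℝ)) + ((q1:ℝ) - x)| := by ring_nf
        _ ≤ _ := abs_add_le _ _
    have h2 : |(q1:ℝ) - x| = |x - (q1:ℝ)| := abs_sub_comm _ _
    linarith
  have hz : μ (ball (q1:ℝ) (q2:ℝ)) = 0 := measure_mono_null hsub hnull'
  refine mem_iUnion.2 ⟨(q1, q2), ?_⟩
  rw [if_pos hz]
  rw [mem_ball, Real.dist_eq]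
  exact hxq

end LLDAux
namespace LLDAux

lemma eventually_le_F {X : Type*} [MetricSpace X] [MeasurableSpace X]
    (μ : Measure X) [IsFiniteMeasure μ] (x : X) {a : ℝ} (ha : a < 0) :
    ∀ᶠ ε in nhdsWithin (0:ℝ) (Ioi 0), a ≤ F μ x ε := by
  set M := max (μ univ).toReal 1 with hMdef
  have hM1 : (1:ℝ) ≤ M := le_max_right _ _
  have htend : Tendsto (fun ε : ℝ => Real.log M / Real.log ε)
      (nhdsWithin (0:ℝ) (Ioi 0)) (nhds 0) := by
    have h1 : Tendsto (fun ε : ℝ => -Real.log ε) (nhdsWithin (0:ℝ) (Ioi 0)) atTop :=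
      tendsto_neg_atBot_atTop.comp Real.tendsto_log_nhdsGT_zero
    have h2 := h1.const_div_atTop (Real.log M)
    have h3 := h2.neg
    simp only [div_neg, neg_neg, neg_zero] at h3
    exact h3
  filter_upwards [Ioo_mem_nhdsGT_of_mem (show (0:ℝ) ∈ Ico (0:ℝ) 1 by constructor <;> norm_num),
    htend.eventually_const_le ha] with ε hε hge
  have hlogε : Real.log ε < 0 := Real.log_neg hε.1 hε.2
  have hT : (μ (ball x ε)).toReal ≤ M := by
    refine le_trans ?_ (le_max_left _ _)
    exact ENNReal.toReal_mono (measure_ne_top μ _) (measure_mono (subset_univ _))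
  have hlogT : Real.log (μ (ball x ε)).toReal ≤ Real.log M := by
    rcases eq_or_lt_of_le (ENNReal.toReal_nonneg (a := μ (ball x ε))) with h | h
    · rw [← h, Real.log_zero]; exact Real.log_nonneg hM1
    · exact Real.log_le_log h hT
  refine le_trans hge ?_
  rw [F, div_le_div_right_of_neg hlogε]
  exact hlogT

lemma bddAbove_S {l : Filter ℝ} {g : ℝ → ℝ} {b : ℝ} (hcob : ∃ᶠ ε in l, g ε ≤ b) :
    BddAbove {a | ∀ᶠ ε in l, a ≤ g ε} := by
  refine ⟨b, fun a ha => ?_⟩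
  obtain ⟨ε, h1, h2⟩ := (hcob.and_eventually ha).exists
  exact h2.trans h1

lemma freq_lt_of_liminf_le {l : Filter ℝ} {g : ℝ → ℝ} {b D c : ℝ}
    (hcob : ∃ᶠ ε in l, g ε ≤ b) (hL : liminf g l ≤ D) (hc : D < c) :
    ∃ᶠ ε in l, g ε < c := by
  by_contra hcon
  rw [not_frequently] at hcon
  have hmem : c ∈ {a | ∀ᶠ ε in l, a ≤ g ε} := hcon.mono fun ε hn => not_lt.1 hn
  have hle : c ≤ liminf g l := by
    rw [liminf_eq]
    exact le_csSup (bddAbove_S hcob) hmem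
  linarith

lemma liminf_nonneg {X : Type*} [MetricSpace X] [MeasurableSpace X]
    (μ : Measure X) [IsFiniteMeasure μ] (x : X) {b : ℝ}
    (hcob : ∃ᶠ ε in nhdsWithin (0:ℝ) (Ioi 0), F μ x ε ≤ b) :
    0 ≤ lowerLocalDim μ x := by
  by_contra hneg
  push_neg at hneg
  have ha : lowerLocalDim μ x / 2 < 0 := by linarith
  have hmem : lowerLocalDim μ x / 2 ∈
      {a | ∀ᶠ ε in nhdsWithin (0:ℝ) (Ioi 0), a ≤ F μ x ε} := eventually_le_F μ x ha
  have := le_csSup (bddAbove_S hcob) hmem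
  rw [← lld_eq_sSup] at this
  linarith

lemma conv_ne_top (ν₁ ν₂ : Measure ℝ) [IsFiniteMeasure ν₁] [IsFiniteMeasure ν₂] (s : Set ℝ) :
    conv ν₁ ν₂ s ≠ ⊤ := by
  have hle : conv ν₁ ν₂ s ≤ conv ν₁ ν₂ univ := measure_mono (subset_univ _)
  rw [conv, Measure.map_apply (f := fun p : ℝ × ℝ => p.1 + p.2) (measurable_fst.add measurable_snd) MeasurableSet.univ,
    preimage_univ] at hle
  exact (hle.trans_lt (measure_lt_top _ _)).ne

lemma conv_ball_ge (ν₁ ν₂ : Measure ℝ) [IsFiniteMeasure ν₁] [IsFiniteMeasure ν₂]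
    (p : ℝ × ℝ) (s : ℝ) :
    (ν₁.prod ν₂) (ball p s) ≤ conv ν₁ ν₂ (ball (p.1 + p.2) (2 * s)) := by
  rw [conv, Measure.map_apply (f := fun p : ℝ × ℝ => p.1 + p.2) (measurable_fst.add measurable_snd) measurableSet_ball]
  refine measure_mono ?_
  rintro ⟨a, b⟩ hab
  rw [mem_ball, Prod.dist_eq, sup_lt_iff] at hab
  obtain ⟨h1, h2⟩ := hab
  rw [Real.dist_eq] at h1 h2
  simp only [mem_preimage, mem_ball, Real.dist_eq]
  have habs : |a + b - (p.1 + p.2)| ≤ |a - p.1| + |b - p.2| := by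
    calc |a + b - (p.1 + p.2)| = |(a - p.1) + (b - p.2)| := by ring_nf
      _ ≤ _ := abs_add_le _ _
  linarith

end LLDAux
namespace LLDAux

lemma ae_freq_le_three (ν₁ ν₂ : Measure ℝ) [IsFiniteMeasure ν₁] [IsFiniteMeasure ν₂] :
    ∀ᵐ p ∂(ν₁.prod ν₂), ∃ᶠ ε in nhdsWithin (0:ℝ) (Ioi 0), F (ν₁.prod ν₂) p ε ≤ 3 := by
  filter_upwards [Besicovitch.ae_tendsto_rnDeriv (volume : Measure (ℝ × ℝ)) (ν₁.prod ν₂),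
    Measure.rnDeriv_lt_top (volume : Measure (ℝ × ℝ)) (ν₁.prod ν₂)] with p hp hlt
  set c := (volume : Measure (ℝ × ℝ)).rnDeriv (ν₁.prod ν₂) p with hcdef
  set C := c + 1 with hCdef
  have hC0 : C ≠ 0 := by simp [hCdef]
  have hCt : C ≠ ⊤ := by simp [hCdef, hlt.ne]
  have hCR1 : (1:ℝ) ≤ C.toReal := by
    rw [show (1:ℝ) = (1 : ENNReal).toReal by simp]
    exact ENNReal.toReal_mono hCt le_add_self
  have hCR0 : (0:ℝ) < C.toReal := by linarith
  have hev : ∀ᶠ r in nhdsWithin (0:ℝ) (Ioi 0),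
      volume (closedBall p r) / (ν₁.prod ν₂) (closedBall p r) < C :=
    hp.eventually_lt_const (ENNReal.lt_add_right hlt.ne one_ne_zero)
  have h_half : Tendsto (fun r : ℝ => r / 2) (nhdsWithin (0:ℝ) (Ioi 0))
      (nhdsWithin (0:ℝ) (Ioi 0)) := by
    rw [tendsto_nhdsWithin_iff]
    constructor
    · have : Tendsto (fun r : ℝ => r / 2) (nhds 0) (nhds (0 / 2)) :=
        (continuous_id.div_const 2).tendsto 0
      simpa using this.mono_left nhdsWithin_le_nhds
    · exact eventually_mem_nhdsWithin.mono fun r hr => by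
        simp only [mem_Ioi] at hr ⊢; linarith
  have hev2 := h_half.eventually hev
  have hlogC : ∀ᶠ r in nhdsWithin (0:ℝ) (Ioi 0), Real.log C.toReal ≤ -Real.log r :=
    (tendsto_neg_atBot_atTop.comp Real.tendsto_log_nhdsGT_zero).eventually_ge_atTop _
  have hres : ∀ᶠ r in nhdsWithin (0:ℝ) (Ioi 0), F (ν₁.prod ν₂) p r ≤ 3 := by
    filter_upwards [hev2,
      Ioo_mem_nhdsGT_of_mem (show (0:ℝ) ∈ Ico (0:ℝ) 1 by constructor <;> norm_num),
      hlogC] with r hr hr01 hlC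
    obtain ⟨hr0, hr1⟩ := hr01
    have hvol : volume (closedBall p (r/2)) = ENNReal.ofReal r * ENNReal.ofReal r := by
      rw [← closedBall_prod_same, Measure.volume_eq_prod, Measure.prod_prod,
        Real.volume_closedBall, Real.volume_closedBall]
      rw [show 2 * (r/2) = r by ring]
    have hvol0 : volume (closedBall p (r/2)) ≠ 0 := by
      rw [hvol]
      simp [ENNReal.ofReal_eq_zero, not_le, hr0]
    have hcb0 : (ν₁.prod ν₂) (closedBall p (r/2)) ≠ 0 := by
      intro hzero
      rw [hzero, ENNReal.div_zero hvol0] at hr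
      exact (not_lt.2 le_top) hr
    have hle1 : volume (closedBall p (r/2)) ≤ C * (ν₁.prod ν₂) (closedBall p (r/2)) := by
      rw [← ENNReal.div_le_iff_le_mul (Or.inr hCt) (Or.inr hC0)]
      · exact hr.le
    have hball : ENNReal.ofReal r * ENNReal.ofReal r / C ≤ (ν₁.prod ν₂) (ball p r) := by
      calc ENNReal.ofReal r * ENNReal.ofReal r / C
          = volume (closedBall p (r/2)) / C := by rw [hvol]
        _ ≤ (ν₁.prod ν₂) (closedBall p (r/2)) := by
            rw [ENNReal.div_le_iff hC0 hCt, mul_comm]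
            exact hle1
        _ ≤ (ν₁.prod ν₂) (ball p r) :=
            measure_mono (closedBall_subset_ball (by linarith))
    set T := ((ν₁.prod ν₂) (ball p r)).toReal with hTdef
    have hTlow : r * r / C.toReal ≤ T := by
      have := ENNReal.toReal_mono (measure_ne_top _ _) hball
      rwa [ENNReal.toReal_div, ENNReal.toReal_mul, ENNReal.toReal_ofReal hr0.le] at this
    have hT0 : (0:ℝ) < r * r / C.toReal := by positivity
    have hlogT : Real.log (r * r) - Real.log C.toReal ≤ Real.log T := by
      rw [← Real.log_div (by positivity) (by positivity)]
      exact Real.log_le_log hT0 hTlow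
    have hlogr : Real.log r < 0 := Real.log_neg hr0 hr1
    rw [F, div_le_iff_of_neg hlogr]
    rw [Real.log_mul (by positivity) (by positivity)] at hlogT
    linarith

  exact hres.frequently

end LLDAux
open LLDAux in
theorem lowerLocalDim_conv_le
    (ν₁ ν₂ : Measure ℝ) [IsFiniteMeasure ν₁] [IsFiniteMeasure ν₂] (D : ℝ)
    (h : ∀ᵐ p ∂(ν₁.prod ν₂), lowerLocalDim (ν₁.prod ν₂) p ≤ D) :
    ∀ᵐ x ∂(conv ν₁ ν₂), lowerLocalDim (conv ν₁ ν₂) x ≤ D := by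
  by_cases hzero : ν₁.prod ν₂ = 0
  · rw [conv, hzero, Measure.map_zero]
    simp
  haveI : NeBot (ae (ν₁.prod ν₂)) := ae_neBot.2 hzero
  have hcob := ae_freq_le_three ν₁ ν₂
  have hD0 : 0 ≤ D := by
    obtain ⟨p, hp1, hp2⟩ := (h.and hcob).exists
    calc (0:ℝ) ≤ lowerLocalDim (ν₁.prod ν₂) p := liminf_nonneg _ p hp2
      _ ≤ D := hp1
  -- the measurable "good" target set
  set E : Set ℝ := {z | ∀ c : ℚ, D < (c:ℝ) → ∀ m : ℕ, ∃ n : ℕ,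
    m ≤ n ∧ F (conv ν₁ ν₂) z ((2⁻¹:ℝ)^(n+1)) < (c:ℝ)} with hEdef
  have hEmeas : MeasurableSet E := by
    have hE2 : E = ⋂ (c : ℚ), ⋂ (m : ℕ), {z | D < (c:ℝ) → ∃ n : ℕ,
        m ≤ n ∧ F (conv ν₁ ν₂) z ((2⁻¹:ℝ)^(n+1)) < (c:ℝ)} := by
      ext z
      simp only [hEdef, mem_iInter, mem_setOf_eq]
      tauto
    rw [hE2]
    refine MeasurableSet.iInter fun c => MeasurableSet.iInter fun m => ?_
    by_cases hc : D < (c:ℝ)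
    · simp only [hc, true_implies]
      have : {z | ∃ n : ℕ, m ≤ n ∧ F (conv ν₁ ν₂) z ((2⁻¹:ℝ)^(n+1)) < (c:ℝ)}
          = ⋃ n : ℕ, {z | m ≤ n ∧ F (conv ν₁ ν₂) z ((2⁻¹:ℝ)^(n+1)) < (c:ℝ)} := by
        ext z; simp only [mem_iUnion, mem_setOf_eq]
      rw [this]
      refine MeasurableSet.iUnion fun n => ?_
      by_cases hmn : m ≤ n
      · simp only [hmn, true_and]
        exact measurableSet_lt (measurable_F _ _) measurable_const
      · simp [hmn]
    · simp [hc]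
  -- Claim A : members of E have small lower local dimension
  have hclaimA : ∀ z ∈ E, lowerLocalDim (conv ν₁ ν₂) z ≤ D := by
    intro z hz
    rw [lld_eq_sSup]
    refine Real.sSup_le (fun a ha => ?_) hD0
    by_contra haD
    push_neg at haD
    obtain ⟨c, hc1, hc2⟩ := exists_rat_btwn haD
    have hfreq : ∃ᶠ n in atTop, F (conv ν₁ ν₂) z ((2⁻¹:ℝ)^(n+1)) < (c:ℝ) :=
      frequently_atTop.2 fun m => hz c hc1 m
    have htend : Tendsto (fun n : ℕ => ((2⁻¹:ℝ))^(n+1)) atTop (nhdsWithin (0:ℝ) (Ioi 0)) := by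
      rw [tendsto_nhdsWithin_iff]
      constructor
      · have h1 := tendsto_pow_atTop_nhds_zero_of_lt_one
          (show (0:ℝ) ≤ 2⁻¹ by norm_num) (show (2⁻¹:ℝ) < 1 by norm_num)
        exact h1.comp (tendsto_add_atTop_nat 1)
      · exact Eventually.of_forall fun n => mem_Ioi.2 (by positivity)
    have hev : ∀ᶠ n in atTop, a ≤ F (conv ν₁ ν₂) z ((2⁻¹:ℝ)^(n+1)) := htend.eventually ha
    obtain ⟨n, h1, h2⟩ := (hfreq.and_eventually hev).exists
    linarith
  -- Claim B : good points are sent into E by addition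
  have hclaimB : ∀ p : ℝ × ℝ, (∀ δ : ℝ, 0 < δ → 0 < ν₁ (ball p.1 δ)) →
      (∀ δ : ℝ, 0 < δ → 0 < ν₂ (ball p.2 δ)) →
      (∃ᶠ ε in nhdsWithin (0:ℝ) (Ioi 0), F (ν₁.prod ν₂) p ε ≤ 3) →
      lowerLocalDim (ν₁.prod ν₂) p ≤ D → p.1 + p.2 ∈ E := by
    intro p hx hy hpc hLp
    intro c hc m
    set c' : ℝ := (D + c)/2 with hc'def
    have hc'0 : 0 < c' := by rw [hc'def]; linarith
    have hc'D : D < c' := by rw [hc'def]; linarith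
    have hc'c : c' < (c:ℝ) := by rw [hc'def]; linarith
    obtain ⟨N₀, hN₀⟩ : ∃ N₀ : ℕ, ∀ n : ℕ, N₀ ≤ n →
        c' * (((n:ℝ)+3) / ((n:ℝ)+1)) < (c:ℝ) := by
      refine ⟨⌈3*c'/((c:ℝ) - c')⌉₊, fun n hn => ?_⟩
      have hnge : (3*c'/((c:ℝ)-c') : ℝ) ≤ n := le_trans (Nat.le_ceil _) (by exact_mod_cast hn)
      have hcc' : (0:ℝ) < (c:ℝ) - c' := by linarith
      have h1 : 3*c' ≤ (n:ℝ)*((c:ℝ)-c') := by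
        rw [div_le_iff₀ hcc'] at hnge; linarith
      have hn1 : (0:ℝ) < (n:ℝ)+1 := by positivity
      rw [mul_div_assoc', div_lt_iff₀ hn1]
      nlinarith
    have hfreq := freq_lt_of_liminf_le hpc (le_of_eq_of_le (lld_eq _ _).symm hLp) hc'D
    set δ₀ : ℝ := (2⁻¹ : ℝ)^(m + N₀ + 3) with hδ₀def
    have hδ₀pos : 0 < δ₀ := by positivity
    have hIoo : ∀ᶠ ε in nhdsWithin (0:ℝ) (Ioi 0), ε ∈ Ioo (0:ℝ) δ₀ :=
      eventually_of_mem (Ioo_mem_nhdsGT_of_mem ⟨le_refl 0, hδ₀pos⟩) (fun _ hx => hx)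
    obtain ⟨ε, hεF, hε0, hεδ⟩ :
        ∃ ε : ℝ, F (ν₁.prod ν₂) p ε < c' ∧ 0 < ε ∧ ε < δ₀ := by
      obtain ⟨ε, h1, h2⟩ := (hfreq.and_eventually hIoo).exists
      exact ⟨ε, h1, h2.1, h2.2⟩
    have hex : ∃ j : ℕ, (2⁻¹:ℝ)^j ≤ ε := by
      obtain ⟨j, hj⟩ := exists_pow_lt_of_lt_one hε0 (show (2⁻¹:ℝ) < 1 by norm_num)
      exact ⟨j, hj.le⟩
    have hkle : (2⁻¹:ℝ)^(Nat.find hex) ≤ ε := Nat.find_spec hex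
    have hklt : ∀ j, j < Nat.find hex → ε < (2⁻¹:ℝ)^j := fun j hj =>
      not_le.1 (Nat.find_min hex hj)
    have hkbig : m + N₀ + 3 < Nat.find hex := by
      by_contra hcon
      push_neg at hcon
      have hle2 : (2⁻¹:ℝ)^(m+N₀+3) ≤ (2⁻¹:ℝ)^(Nat.find hex) :=
        pow_le_pow_of_le_one (by norm_num) (by norm_num) hcon
      have := hkle.trans_lt hεδ
      rw [hδ₀def] at this
      linarith
    set n := Nat.find hex - 3 with hndef
    have hk3 : Nat.find hex = n + 3 := by omega
    have hnm : m ≤ n := by omega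
    have hnN : N₀ ≤ n := by omega
    have hεup : ε < (2⁻¹:ℝ)^(n+2) := hklt (n+2) (by omega)
    have hε1 : ε < 1 := lt_trans hεδ (by
      rw [hδ₀def]
      exact pow_lt_one₀ (by norm_num) (by norm_num) (by omega))
    have hlogε : Real.log ε < 0 := Real.log_neg hε0 hε1
    have hball_pos : 0 < (ν₁.prod ν₂) (ball p ε) := by
      rw [show p = (p.1, p.2) from rfl, ← ball_prod_same, Measure.prod_prod]
      exact ENNReal.mul_pos (hx ε hε0).ne' (hy ε hε0).ne'
    have hball_ne_top : (ν₁.prod ν₂) (ball p ε) ≠ ⊤ := measure_ne_top _ _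
    set T := ((ν₁.prod ν₂) (ball p ε)).toReal with hTdef
    have hT0 : 0 < T := ENNReal.toReal_pos hball_pos.ne' hball_ne_top
    have hlogT : c' * Real.log ε < Real.log T := by
      rw [F] at hεF
      exact (div_lt_iff_of_neg hlogε).1 hεF
    have hrp : ε ^ (c' : ℝ) < T := by
      rw [Real.rpow_def_of_pos hε0, ← Real.exp_log hT0]
      exact Real.exp_lt_exp.2 (by rw [mul_comm]; exact hlogT)
    have hrp2 : ((2⁻¹:ℝ)^(n+3) : ℝ) ^ (c' : ℝ) ≤ ε ^ (c' : ℝ) :=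
      Real.rpow_le_rpow (by positivity) (hk3 ▸ hkle) hc'0.le
    have hconv : T ≤ (conv ν₁ ν₂ (ball (p.1 + p.2) ((2⁻¹:ℝ)^(n+1)))).toReal := by
      refine ENNReal.toReal_mono (conv_ne_top _ _ _) ?_
      calc (ν₁.prod ν₂) (ball p ε)
          ≤ (ν₁.prod ν₂) (ball p ((2⁻¹:ℝ)^(n+2))) := measure_mono (ball_subset_ball hεup.le)
        _ ≤ conv ν₁ ν₂ (ball (p.1 + p.2) (2 * (2⁻¹:ℝ)^(n+2))) := conv_ball_ge _ _ _ _
        _ = conv ν₁ ν₂ (ball (p.1 + p.2) ((2⁻¹:ℝ)^(n+1))) := by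
            rw [show 2 * (2⁻¹:ℝ)^(n+2) = (2⁻¹:ℝ)^(n+1) by
              rw [pow_succ]; ring]
    refine ⟨n, hnm, ?_⟩
    have hrn0 : (0:ℝ) < (2⁻¹:ℝ)^(n+1) := by positivity
    have hlogrn : Real.log ((2⁻¹:ℝ)^(n+1)) < 0 :=
      Real.log_neg hrn0 (pow_lt_one₀ (by norm_num) (by norm_num) (by omega))
    rw [F, div_lt_iff_of_neg hlogrn]
    set U := (conv ν₁ ν₂ (ball (p.1 + p.2) ((2⁻¹:ℝ)^(n+1)))).toReal with hUdef
    have hUlow : ((2⁻¹:ℝ)^(n+3) : ℝ) ^ (c' : ℝ) < U :=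
      lt_of_lt_of_le (lt_of_le_of_lt hrp2 hrp) hconv
    have hlogU : c' * (((n:ℝ)+3) * Real.log 2⁻¹) < Real.log U := by
      have hlt := Real.log_lt_log (by positivity) hUlow
      rwa [Real.log_rpow (by positivity), Real.log_pow, Nat.cast_add, Nat.cast_ofNat] at hlt
    have hlogrn_eq : Real.log ((2⁻¹:ℝ)^(n+1)) = ((n:ℝ)+1) * Real.log 2⁻¹ := by
      rw [Real.log_pow]; push_cast; ring
    have hratio := hN₀ n hnN
    calc (c:ℝ) * Real.log ((2⁻¹:ℝ)^(n+1))
        < (c' * (((n:ℝ)+3) / ((n:ℝ)+1))) * Real.log ((2⁻¹:ℝ)^(n+1)) :=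
          mul_lt_mul_of_neg_right hratio hlogrn
      _ = c' * (((n:ℝ)+3) * Real.log 2⁻¹) := by
          rw [hlogrn_eq]
          have hn1 : ((n:ℝ)+1) ≠ 0 := by positivity
          field_simp
      _ < Real.log U := hlogU
  -- assemble
  have hs1 : ∀ᵐ p ∂(ν₁.prod ν₂), ∀ δ : ℝ, 0 < δ → 0 < ν₁ (ball p.1 δ) :=
    Measure.quasiMeasurePreserving_fst.ae (ae_ball_pos ν₁)
  have hs2 : ∀ᵐ p ∂(ν₁.prod ν₂), ∀ δ : ℝ, 0 < δ → 0 < ν₂ (ball p.2 δ) :=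
    Measure.quasiMeasurePreserving_snd.ae (ae_ball_pos ν₂)
  have hmem : ∀ᵐ p ∂(ν₁.prod ν₂), p.1 + p.2 ∈ E := by
    filter_upwards [h, hs1, hs2, hcob] with p hLp hp1 hp2 hpc
    exact hclaimB p hp1 hp2 hpc hLp
  rw [ae_iff]
  have hsub : {z | ¬ lowerLocalDim (conv ν₁ ν₂) z ≤ D} ⊆ Eᶜ :=
    fun z hzmem hzE => hzmem (hclaimA z hzE)
  refine measure_mono_null hsub ?_
  rw [conv, Measure.map_apply (f := fun p : ℝ × ℝ => p.1 + p.2) (measurable_fst.add measurable_snd) hEmeas.compl]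
  rw [ae_iff] at hmem
  exact hmem
end

section
/- For a finite Borel measure μ on ℝ^d, the upper Hausdorff dimension dim_H⁺(μ) = inf{dim_H(S) : μ(ℝ^d \ S) = 0} satisfies dim_H⁺(μ) ≤ esssup of the lower local dimension α⁻_μ with respect to μ. -/
open MeasureTheory Metric Filter Set
open scoped Topology ENNReal NNReal

lemma ediam_cb {X : Type*} [PseudoMetricSpace X] (x : X) {r : ℝ} (h : 0 ≤ r) :
    EMetric.diam (closedBall x r) ≤ ENNReal.ofReal (2 * r) := by
  refine EMetric.diam_le fun p hp q hq => ?_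
  rw [edist_dist]
  refine ENNReal.ofReal_le_ofReal ?_
  calc dist p q ≤ dist p x + dist x q := dist_triangle _ _ _
    _ ≤ r + r := add_le_add hp (dist_comm x q ▸ hq)
    _ = 2 * r := by ring

lemma my_vitali {X : Type*} [MetricSpace X] [SecondCountableTopology X]
    (A : Set X) (r : X → ℝ) (δ : ℝ)
    (hr : ∀ x ∈ A, 0 < r x ∧ r x ≤ δ) :
    ∃ u ⊆ A, u.Countable ∧ u.PairwiseDisjoint (fun b => closedBall b (r b)) ∧
      A ⊆ ⋃ b ∈ u, closedBall b (4 * r b) := by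
  obtain ⟨u, hu, hdisj, hcov⟩ :=
    Vitali.exists_disjoint_subfamily_covering_enlargement_closedBall A id r δ
      (fun a ha => (hr a ha).2) 4 (by norm_num)
  refine ⟨u, hu, ?_, hdisj, ?_⟩
  · apply hdisj.countable_of_nonempty_interior
    intro b hb
    exact (nonempty_ball.2 (hr b (hu hb)).1).mono ball_subset_interior_closedBall
  · intro a ha
    obtain ⟨b, hb, hsub⟩ := hcov a ha
    exact mem_biUnion hb (hsub (mem_closedBall_self (hr a ha).1.le))

lemma frostman {n : ℕ} (μ : Measure (Fin n → ℝ)) [IsFiniteMeasure μ] {t : ℝ} (ht : 0 < t)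
    {A : Set (Fin n → ℝ)}
    (hA : ∀ x ∈ A, ∀ δ : ℝ, 0 < δ → ∃ ε : ℝ, 0 < ε ∧ ε ≤ δ ∧
      ENNReal.ofReal (ε ^ t) ≤ μ (closedBall x ε)) :
    dimH A ≤ ENNReal.ofReal t := by
  classical
  have key : μH[t] A ≠ ⊤ := by
    have choice : ∀ m : ℕ, ∃ rad : (Fin n → ℝ) → ℝ, ∀ x ∈ A,
        0 < rad x ∧ rad x ≤ 1/(m+1) ∧ ENNReal.ofReal (rad x ^ t) ≤ μ (closedBall x (rad x)) := by
      intro m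
      choose f hf using fun x (hx : x ∈ A) => hA x hx (1/(m+1)) (by positivity)
      exact ⟨fun x => if hx : x ∈ A then f x hx else 1, fun x hx => by simp only [dif_pos hx]; exact hf x hx⟩
    choose rad hrad using choice
    have vit : ∀ m : ℕ, ∃ u ⊆ A, u.Countable ∧
        u.PairwiseDisjoint (fun b => closedBall b (rad m b)) ∧
        A ⊆ ⋃ b ∈ u, closedBall b (4 * rad m b) :=
      fun m => my_vitali A (rad m) (1/(m+1))
        (fun x hx => ⟨(hrad m x hx).1, (hrad m x hx).2.1⟩)
    choose u hu hcount hdisj hcov using vit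
    haveI : ∀ m, Countable (u m) := fun m => (hcount m).to_subtype
    have hradpos : ∀ m, ∀ i : u m, 0 < rad m i := fun m i => (hrad m i (hu m i.2)).1
    have main : μH[t] A ≤
        liminf (fun m => ∑' i : u m,
          (EMetric.diam (closedBall (i : Fin n → ℝ) (4 * rad m i))) ^ t) atTop := by
      apply Measure.hausdorffMeasure_le_liminf_tsum t A (fun m : ℕ => ENNReal.ofReal (8/(m+1)))
      · have h1 : Tendsto (fun m : ℕ => 8/((m:ℝ)+1)) atTop (𝓝 0) := by
          simpa [div_eq_mul_inv] using Filter.Tendsto.const_mul (8:ℝ) tendsto_one_div_add_atTop_nhds_zero_nat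
        simpa using ENNReal.tendsto_ofReal h1
      · refine Eventually.of_forall fun m => fun i => ?_
        refine (ediam_cb _ (by linarith [hradpos m i])).trans ?_
        refine ENNReal.ofReal_le_ofReal ?_
        have := (hrad m i (hu m i.2)).2.1
        simp only [div_eq_mul_inv] at *
        linarith
      · refine Eventually.of_forall fun m => ?_
        rw [iUnion_coe_set]
        exact hcov m
    have sumb : ∀ m : ℕ, (∑' i : u m,
        (EMetric.diam (closedBall (i : Fin n → ℝ) (4 * rad m i))) ^ t)
        ≤ ENNReal.ofReal (8 ^ t) * μ univ := by
      intro m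
      have step : ∀ i : u m,
          (EMetric.diam (closedBall (i : Fin n → ℝ) (4 * rad m i))) ^ t
          ≤ ENNReal.ofReal (8 ^ t) * μ (closedBall (i : Fin n → ℝ) (rad m i)) := by
        intro i
        have hi : (i : Fin n → ℝ) ∈ A := hu m i.2
        have hpos := (hrad m i hi).1
        calc (EMetric.diam (closedBall (i : Fin n → ℝ) (4 * rad m i))) ^ t
            ≤ (ENNReal.ofReal (8 * rad m i)) ^ t := by
              refine ENNReal.rpow_le_rpow ((ediam_cb _ (by positivity)).trans ?_) ht.le
              exact ENNReal.ofReal_le_ofReal (by linarith)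
          _ = ENNReal.ofReal ((8 * rad m i) ^ t) :=
              ENNReal.ofReal_rpow_of_pos (by linarith)
          _ = ENNReal.ofReal (8 ^ t * rad m i ^ t) := by
              rw [Real.mul_rpow (by norm_num) hpos.le]
          _ = ENNReal.ofReal (8 ^ t) * ENNReal.ofReal (rad m i ^ t) := by
              rw [ENNReal.ofReal_mul (by positivity)]
          _ ≤ ENNReal.ofReal (8 ^ t) * μ (closedBall (i : Fin n → ℝ) (rad m i)) :=
              mul_le_mul_right (hrad m i hi).2.2 _
      calc (∑' i : u m, (EMetric.diam (closedBall (i : Fin n → ℝ) (4 * rad m i))) ^ t)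
          ≤ ∑' i : u m, ENNReal.ofReal (8 ^ t) * μ (closedBall (i : Fin n → ℝ) (rad m i)) :=
            ENNReal.tsum_le_tsum step
        _ = ENNReal.ofReal (8 ^ t) * ∑' i : u m, μ (closedBall (i : Fin n → ℝ) (rad m i)) :=
            ENNReal.tsum_mul_left
        _ = ENNReal.ofReal (8 ^ t) * μ (⋃ b ∈ u m, closedBall b (rad m b)) := by
            rw [measure_biUnion (hcount m) (hdisj m) (fun b _ => measurableSet_closedBall)]
        _ ≤ ENNReal.ofReal (8 ^ t) * μ univ :=
            mul_le_mul_right (measure_mono (subset_univ _)) _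
    have : μH[t] A ≤ ENNReal.ofReal (8 ^ t) * μ univ :=
      main.trans (liminf_le_of_frequently_le' (Frequently.of_forall sumb))
    exact ne_top_of_le_ne_top
      (ENNReal.mul_ne_top ENNReal.ofReal_ne_top (measure_ne_top μ univ)) this
  have h2 : μH[((t.toNNReal : ℝ))] A ≠ ⊤ := by
    rwa [Real.coe_toNNReal t ht.le]
  simpa [ENNReal.ofReal] using dimH_le_of_hausdorffMeasure_ne_top h2

lemma thin_null (n : ℕ) (μ : Measure (Fin n → ℝ)) [IsFiniteMeasure μ] :
    μ {x | ∀ᶠ ε in 𝓝[>] (0:ℝ), (μ (ball x ε)).toReal ≤ ε ^ ((n:ℝ)+1)} = 0 := by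
  classical
  set T := {x | ∀ᶠ ε in 𝓝[>] (0:ℝ), (μ (ball x ε)).toReal ≤ ε ^ ((n:ℝ)+1)} with hT
  rcases Nat.eq_zero_or_pos n with hn | hn
  · subst hn
    haveI : Subsingleton (Fin 0 → ℝ) := ⟨fun a b => funext fun i => i.elim0⟩
    rcases eq_empty_or_nonempty T with h | ⟨x, hx⟩
    · simp [h]
    · have hx' : ∀ᶠ ε in 𝓝[>] (0:ℝ), (μ (ball x ε)).toReal ≤ ε ^ (((0:ℕ):ℝ)+1) := hx
      have huniv : μ univ = 0 := by
        have hsmall : ∀ c : ℝ, 0 < c → (μ univ).toReal ≤ c := by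
          intro c hc
          have hIoo : Ioo (0:ℝ) c ∈ 𝓝[>] (0:ℝ) :=
            Ioo_mem_nhdsGT_of_mem ⟨le_refl _, hc⟩
          obtain ⟨ε, hε1, hε2⟩ := (hx'.and (eventually_iff.2 hIoo)).exists
          have hball : ball x ε = univ := by
            apply eq_univ_of_forall
            intro y
            rw [mem_ball, Subsingleton.elim y x, dist_self]
            exact hε2.1
          rw [hball] at hε1
          calc (μ univ).toReal ≤ ε ^ (((0:ℕ):ℝ)+1) := hε1
            _ = ε := by norm_num
            _ ≤ c := hε2.2.le
        have h0 : (μ univ).toReal ≤ 0 := le_of_forall_gt_imp_ge_of_dense fun c hc => hsmall c hc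
        have := ENNReal.toReal_nonneg (a := μ univ)
        have heq : (μ univ).toReal = 0 := le_antisymm h0 this
        rwa [ENNReal.toReal_eq_zero_iff, or_iff_left (measure_ne_top μ univ)] at heq
      exact measure_mono_null (subset_univ T) huniv
  haveI : Nontrivial (Fin n → ℝ) := by
    refine ⟨0, fun _ => 1, fun h => ?_⟩
    have := congrFun h ⟨0, hn⟩
    norm_num at this
  set V := volume (ball (0 : Fin n → ℝ) 1) with hV
  have V0 : V ≠ 0 := (measure_ball_pos volume 0 one_pos).ne'
  have Vtop : V ≠ ⊤ := measure_ball_lt_top.ne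
  have hsub : T ⊆ ⋃ K : ℕ, T ∩ closedBall 0 (K : ℝ) := by
    intro x hx
    obtain ⟨K, hK⟩ := exists_nat_ge (dist x 0)
    exact mem_iUnion.2 ⟨K, hx, mem_closedBall.2 hK⟩
  refine measure_mono_null hsub (measure_iUnion_null fun K => ?_)
  set C : ℝ≥0∞ := ENNReal.ofReal (5^(n+1)) * V⁻¹ * volume (ball (0 : Fin n → ℝ) ((K:ℝ)+2))
    with hC
  have Ctop : C ≠ ⊤ := by
    refine ENNReal.mul_ne_top (ENNReal.mul_ne_top ENNReal.ofReal_ne_top ?_)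
      measure_ball_lt_top.ne
    exact ENNReal.inv_ne_top.2 V0
  have est : ∀ δ : ℝ, 0 < δ → δ ≤ 1 →
      μ (T ∩ closedBall 0 (K : ℝ)) ≤ ENNReal.ofReal δ * C := by
    intro δ hδ hδ1
    -- choose thresholds
    have hch : ∀ x ∈ T ∩ closedBall 0 (K:ℝ), ∃ d : ℝ, 0 < d ∧
        ∀ ε ∈ Ioo (0:ℝ) d, (μ (ball x ε)).toReal ≤ ε ^ ((n:ℝ)+1) := by
      intro x hx
      have hev : ∀ᶠ ε in 𝓝[>] (0:ℝ), (μ (ball x ε)).toReal ≤ ε ^ ((n:ℝ)+1) := hx.1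
      rw [eventually_iff, mem_nhdsGT_iff_exists_Ioo_subset] at hev
      obtain ⟨d, hd, hsub'⟩ := hev
      exact ⟨d, hd, fun ε hε => hsub' hε⟩
    choose! d hd0 hdP using hch
    set rad : (Fin n → ℝ) → ℝ := fun x => min δ (d x / 6) with hradDef
    have hradprop : ∀ x ∈ T ∩ closedBall 0 (K:ℝ), 0 < rad x ∧ rad x ≤ δ :=
      fun x hx => ⟨lt_min hδ (by linarith [hd0 x hx]), min_le_left _ _⟩
    obtain ⟨u, hu, hcount, hdisj, hcov⟩ := my_vitali _ rad δ hradprop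
    haveI : Countable u := hcount.to_subtype
    have key : ∀ b : u, μ (closedBall (b : Fin n → ℝ) (4 * rad b))
        ≤ (ENNReal.ofReal δ * ENNReal.ofReal (5^(n+1)) * V⁻¹) * volume (ball (b : Fin n → ℝ) (rad b)) := by
      intro b
      have hb := hu b.2
      have hr0 : 0 < rad b := (hradprop b hb).1
      have hrδ : rad b ≤ δ := (hradprop b hb).2
      have h5 : 5 * rad b ∈ Ioo (0:ℝ) (d b) := by
        constructor
        · linarith
        · have : rad b ≤ d b / 6 := min_le_right _ _
          linarith [hd0 b hb]
      have hmass : (μ (ball (b : Fin n → ℝ) (5 * rad b))).toReal ≤ (5 * rad b) ^ ((n:ℝ)+1) :=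
        hdP b hb _ h5
      have hpow : (5 * rad b) ^ ((n:ℝ)+1) ≤ 5^(n+1) * δ * rad b ^ n := by
        have : ((n:ℝ)+1) = ((n+1 : ℕ) : ℝ) := by push_cast; ring
        rw [this, Real.rpow_natCast, mul_pow, pow_succ (rad b)]
        have h1 : rad b ^ n * rad b ≤ rad b ^ n * δ :=
          mul_le_mul_of_nonneg_left hrδ (by positivity)
        calc (5:ℝ)^(n+1) * (rad b ^ n * rad b) ≤ 5^(n+1) * (rad b ^ n * δ) := by
              have : (0:ℝ) < 5^(n+1) := by positivity
              nlinarith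
          _ = 5^(n+1) * δ * rad b ^ n := by ring
      have step1 : μ (closedBall (b : Fin n → ℝ) (4 * rad b))
          ≤ μ (ball (b : Fin n → ℝ) (5 * rad b)) :=
        measure_mono (closedBall_subset_ball (by linarith))
      have step2 : μ (ball (b : Fin n → ℝ) (5 * rad b))
          ≤ ENNReal.ofReal (5^(n+1) * δ * rad b ^ n) := by
        rw [← ENNReal.ofReal_toReal (measure_ne_top μ _)]
        exact ENNReal.ofReal_le_ofReal (hmass.trans hpow)
      have hvol : ENNReal.ofReal (rad b ^ n) = volume (ball (b : Fin n → ℝ) (rad b)) * V⁻¹ := by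
        have := Measure.addHaar_ball volume (b : Fin n → ℝ) hr0.le
        rw [Module.finrank_fin_fun] at this
        rw [this, hV, mul_assoc, ENNReal.mul_inv_cancel V0 Vtop, mul_one]
      calc μ (closedBall (b : Fin n → ℝ) (4 * rad b))
          ≤ ENNReal.ofReal (5^(n+1) * δ * rad b ^ n) := step1.trans step2
        _ = ENNReal.ofReal δ * ENNReal.ofReal (5^(n+1)) * ENNReal.ofReal (rad b ^ n) := by
            rw [← ENNReal.ofReal_mul (by positivity), ← ENNReal.ofReal_mul (by positivity)]
            ring_nf
        _ = (ENNReal.ofReal δ * ENNReal.ofReal (5^(n+1)) * V⁻¹) * volume (ball (b : Fin n → ℝ) (rad b)) := by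
            rw [hvol]; ring
    have hballs : (⋃ b ∈ u, ball b (rad b)) ⊆ ball (0 : Fin n → ℝ) ((K:ℝ)+2) := by
      intro y hy
      obtain ⟨b, hb, hyb⟩ := mem_iUnion₂.1 hy
      have hbK : dist b 0 ≤ (K:ℝ) := mem_closedBall.1 (hu hb).2
      have : dist y b < rad b := mem_ball.1 hyb
      have hrb : rad b ≤ δ := (hradprop b (hu hb)).2
      have : dist y 0 < (K:ℝ) + 2 := by
        calc dist y 0 ≤ dist y b + dist b 0 := dist_triangle _ _ _
          _ < rad b + K := by linarith
          _ ≤ (K:ℝ) + 2 := by linarith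
      exact mem_ball.2 this
    calc μ (T ∩ closedBall 0 (K:ℝ))
        ≤ μ (⋃ b ∈ u, closedBall b (4 * rad b)) := measure_mono hcov
      _ ≤ ∑' b : u, μ (closedBall (b : Fin n → ℝ) (4 * rad b)) := measure_biUnion_le μ hcount _
      _ ≤ ∑' b : u, (ENNReal.ofReal δ * ENNReal.ofReal (5^(n+1)) * V⁻¹)
            * volume (ball (b : Fin n → ℝ) (rad b)) := ENNReal.tsum_le_tsum key
      _ = (ENNReal.ofReal δ * ENNReal.ofReal (5^(n+1)) * V⁻¹)
            * ∑' b : u, volume (ball (b : Fin n → ℝ) (rad b)) := ENNReal.tsum_mul_left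
      _ = (ENNReal.ofReal δ * ENNReal.ofReal (5^(n+1)) * V⁻¹)
            * volume (⋃ b ∈ u, ball b (rad b)) := by
          rw [measure_biUnion hcount (hdisj.mono fun b => ball_subset_closedBall)
            (fun b _ => measurableSet_ball)]
      _ ≤ (ENNReal.ofReal δ * ENNReal.ofReal (5^(n+1)) * V⁻¹)
            * volume (ball (0 : Fin n → ℝ) ((K:ℝ)+2)) :=
          mul_le_mul_right (measure_mono hballs) _
      _ = ENNReal.ofReal δ * C := by rw [hC]; ring
  have htend : Tendsto (fun j : ℕ => ENNReal.ofReal (1/(j+1)) * C) atTop (𝓝 0) := by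
    have h1 : Tendsto (fun j : ℕ => ENNReal.ofReal (1/(j+1))) atTop (𝓝 0) := by
      simpa using ENNReal.tendsto_ofReal tendsto_one_div_add_atTop_nhds_zero_nat
    simpa using ENNReal.Tendsto.mul_const h1 (Or.inr Ctop)
  have hle : ∀ j : ℕ, μ (T ∩ closedBall 0 (K:ℝ)) ≤ ENNReal.ofReal (1/(j+1)) * C := by
    intro j
    refine est (1/(j+1)) (by positivity) ?_
    rw [div_le_one (by positivity)]
    linarith [Nat.cast_nonneg (α := ℝ) j]
  exact le_zero_iff.1 (ge_of_tendsto' htend hle)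

theorem upper_hausdorff_dim_le_esssup_lowerLocalDim
    (n : ℕ) (μ : Measure (Fin n → ℝ)) [IsFiniteMeasure μ] :
    (⨅ (S : Set (Fin n → ℝ)) (_ : μ Sᶜ = 0), dimH S)
      ≤ essSup (fun x => ENNReal.ofReal (lowerLocalDim μ x)) μ := by
  classical
  set g : (Fin n → ℝ) → ℝ≥0∞ := fun x => ENNReal.ofReal (lowerLocalDim μ x) with hg
  set α := essSup g μ with hα
  rcases eq_top_or_lt_top α with htop | hlt
  · exact htop ▸ le_top
  set T := {x : Fin n → ℝ | ∀ᶠ ε in 𝓝[>] (0:ℝ), (μ (ball x ε)).toReal ≤ ε ^ ((n:ℝ)+1)}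
    with hT
  set O := {x : Fin n → ℝ | ∃ ε > 0, μ (ball x ε) = 0} with hO
  have hOnull : μ O = 0 := by
    have hch : ∀ x : O, ∃ ε : ℝ, 0 < ε ∧ μ (ball (x : Fin n → ℝ) ε) = 0 := by
      rintro ⟨x, ε, hε, h0⟩
      exact ⟨ε, hε, h0⟩
    choose ε hε h0 using hch
    obtain ⟨Tc, hTc, hTcU⟩ := TopologicalSpace.isOpen_iUnion_countable
      (fun i : O => ball (i : Fin n → ℝ) (ε i)) (fun i => isOpen_ball)
    have hOsub : O ⊆ ⋃ i ∈ Tc, ball (i : Fin n → ℝ) (ε i) := by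
      rw [hTcU]
      intro x hx
      exact mem_iUnion.2 ⟨⟨x, hx⟩, mem_ball_self (hε ⟨x, hx⟩)⟩
    refine measure_mono_null hOsub ?_
    rw [measure_biUnion_null_iff hTc]
    exact fun i _ => h0 i
  set S := {x | g x ≤ α} \ (T ∪ O) with hS
  have hSc : μ Sᶜ = 0 := by
    have h1 : μ {x | ¬ g x ≤ α} = 0 := by
      have := ENNReal.ae_le_essSup (μ := μ) g
      rwa [← hα, Filter.Eventually, mem_ae_iff] at this
    have hScEq : Sᶜ = {x | ¬ g x ≤ α} ∪ (T ∪ O) := by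
      ext x
      simp only [hS, Set.mem_compl_iff, Set.mem_diff, Set.mem_union, Set.mem_setOf_eq,
        not_and, not_not]
      tauto
    rw [hScEq]
    exact measure_union_null h1 (measure_union_null (thin_null n μ) hOnull)
  refine (iInf₂_le S hSc).trans ?_
  have key : ∀ t' : ℝ, α.toReal < t' → dimH S ≤ ENNReal.ofReal t' := by
    intro t' ht'
    have ht'0 : 0 < t' := lt_of_le_of_lt ENNReal.toReal_nonneg ht'
    apply frostman μ ht'0
    intro x hx δ hδ
    obtain ⟨hxg, hxTO⟩ := hx
    have hxT : x ∉ T := fun h => hxTO (Or.inl h)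
    have hxO : x ∉ O := fun h => hxTO (Or.inr h)
    have hL : lowerLocalDim μ x ≤ α.toReal :=
      (ENNReal.ofReal_le_iff_le_toReal hlt.ne).1 hxg
    set f : ℝ → ℝ := fun ε => Real.log (μ (ball x ε)).toReal / Real.log ε with hf
    have hsmall1 : ∀ᶠ ε in 𝓝[>] (0:ℝ), ε ∈ Ioo (0:ℝ) 1 :=
      eventually_iff.2 (Ioo_mem_nhdsGT_of_mem ⟨le_refl _, one_pos⟩)
    have hfreq : ∃ᶠ ε in 𝓝[>] (0:ℝ), f ε < t' := by
      by_contra hcon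
      rw [not_frequently] at hcon
      have hev : ∀ᶠ ε in 𝓝[>] (0:ℝ), t' ≤ f ε := hcon.mono fun ε h => not_lt.1 h
      by_cases hbdd : BddAbove {a : ℝ | ∀ᶠ ε in 𝓝[>] (0:ℝ), a ≤ f ε}
      · have hle : t' ≤ lowerLocalDim μ x := by
          have : lowerLocalDim μ x = sSup {a : ℝ | ∀ᶠ ε in 𝓝[>] (0:ℝ), a ≤ f ε} :=
            liminf_eq
          rw [this]
          exact le_csSup hbdd hev
        linarith
      · apply hxT
        rw [not_bddAbove_iff] at hbdd
        obtain ⟨a, ha, hna⟩ := hbdd ((n:ℝ)+1)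
        have ha' : ∀ᶠ ε in 𝓝[>] (0:ℝ), a ≤ f ε := ha
        refine (ha'.and hsmall1).mono ?_
        rintro ε ⟨haf, hε0, hε1⟩
        rcases eq_or_lt_of_le (ENNReal.toReal_nonneg (a := μ (ball x ε))) with hm | hm
        · rw [← hm]
          positivity
        · have hlogε : Real.log ε < 0 := Real.log_neg hε0 hε1
          have h1 : Real.log (μ (ball x ε)).toReal ≤ a * Real.log ε :=
            (le_div_iff_of_neg hlogε).1 haf
          have h2 : a * Real.log ε ≤ ((n:ℝ)+1) * Real.log ε :=
            mul_le_mul_of_nonpos_right hna.le hlogε.le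
          have h3 : (μ (ball x ε)).toReal ≤ Real.exp (((n:ℝ)+1) * Real.log ε) := by
            calc (μ (ball x ε)).toReal = Real.exp (Real.log (μ (ball x ε)).toReal) :=
                  (Real.exp_log hm).symm
              _ ≤ Real.exp (((n:ℝ)+1) * Real.log ε) := Real.exp_le_exp.2 (h1.trans h2)
          rw [mul_comm] at h3
          rwa [← Real.rpow_def_of_pos hε0] at h3
    have hIoo : Ioo (0:ℝ) (min δ 1) ∈ 𝓝[>] (0:ℝ) :=
      Ioo_mem_nhdsGT_of_mem ⟨le_refl _, lt_min hδ one_pos⟩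
    obtain ⟨ε, hfε, hεI⟩ := (hfreq.and_eventually (eventually_iff.2 hIoo)).exists
    have hε0 : 0 < ε := hεI.1
    have hε1 : ε < 1 := hεI.2.trans_le (min_le_right _ _)
    have hεδ : ε ≤ δ := (hεI.2.trans_le (min_le_left _ _)).le
    have hm0 : μ (ball x ε) ≠ 0 := fun h => hxO ⟨ε, hε0, h⟩
    have hmtop : μ (ball x ε) ≠ ⊤ := measure_ne_top μ _
    have hmpos : 0 < (μ (ball x ε)).toReal := ENNReal.toReal_pos hm0 hmtop
    have hlogε : Real.log ε < 0 := Real.log_neg hε0 hε1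
    have hlt2 : t' * Real.log ε < Real.log (μ (ball x ε)).toReal := by
      have := hfε
      rw [hf, div_lt_iff_of_neg hlogε] at this
      linarith [this]
    have hgt : ε ^ t' < (μ (ball x ε)).toReal := by
      calc ε ^ t' = Real.exp (Real.log ε * t') := Real.rpow_def_of_pos hε0 t'
        _ < Real.exp (Real.log (μ (ball x ε)).toReal) := Real.exp_lt_exp.2 (by linarith)
        _ = (μ (ball x ε)).toReal := Real.exp_log hmpos
    refine ⟨ε, hε0, hεδ, ?_⟩
    calc ENNReal.ofReal (ε ^ t') ≤ ENNReal.ofReal ((μ (ball x ε)).toReal) :=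
          ENNReal.ofReal_le_ofReal hgt.le
      _ = μ (ball x ε) := ENNReal.ofReal_toReal hmtop
      _ ≤ μ (closedBall x ε) := measure_mono ball_subset_closedBall
  have htendα : Tendsto (fun j : ℕ => ENNReal.ofReal (α.toReal + 1/(j+1))) atTop (𝓝 α) := by
    have h1 : Tendsto (fun j : ℕ => α.toReal + 1/((j:ℝ)+1)) atTop (𝓝 (α.toReal)) := by
      simpa using (tendsto_const_nhds (x := α.toReal)).add tendsto_one_div_add_atTop_nhds_zero_nat
    have h2 := ENNReal.tendsto_ofReal h1
    rwa [ENNReal.ofReal_toReal hlt.ne] at h2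
  refine ge_of_tendsto' htendα fun j => key _ ?_
  have : (0:ℝ) < 1/((j:ℝ)+1) := by positivity
  linarith
end
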